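/- The operator ⟨∇* f⟩_i := (1/|ω_i|) Σ_j (|Γ_ij|/r_ij) [ (f_i - f_j)(m_ij - (x_i+x_j)/2) - ((f_i+f_j)/2) (x_i - x_j) ] is the negative adjoint of the discrete gradient ⟨∇f⟩_i = -(1/|ω_i|) Σ_j (|Γ_ij|/r_ij)(f_i - f_j)(m_ij - x_i) with respect to the inner product (f,g) = Σ_i |ω_i| f_i g_i; that is, Σ_i |ω_i| ⟨∇f⟩_i g_i = -Σ_i |ω_i| f_i ⟨∇*g⟩_i for all scalar fields f, g. -/

import Mathlib

lemma sum_sum_eq_of_symm {V : Type*} [AddCommGroup V] [Module ℝ V] {N : ℕ}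
    (F G : Fin N → Fin N → V)
    (h : ∀ i j, F i j + F j i = G i j + G j i) :
    ∑ i, ∑ j, F i j = ∑ i, ∑ j, G i j := by
  have h2 : (2:ℝ) • (∑ i, ∑ j, F i j) = (2:ℝ) • (∑ i, ∑ j, G i j) := by
    have hswapF : (∑ i, ∑ j, F i j) = ∑ i, ∑ j, F j i := Finset.sum_comm
    have hswapG : (∑ i, ∑ j, G i j) = ∑ i, ∑ j, G j i := Finset.sum_comm
    calc (2:ℝ) • (∑ i, ∑ j, F i j)
        = (∑ i, ∑ j, F i j) + (∑ i, ∑ j, F j i) := by rw [← hswapF, two_smul]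
      _ = ∑ i, ∑ j, (F i j + F j i) := by
          rw [← Finset.sum_add_distrib]
          exact Finset.sum_congr rfl fun i _ => (Finset.sum_add_distrib).symm
      _ = ∑ i, ∑ j, (G i j + G j i) := by simp only [h]
      _ = (∑ i, ∑ j, G i j) + (∑ i, ∑ j, G j i) := by
          rw [← Finset.sum_add_distrib]
          exact Finset.sum_congr rfl fun i _ => Finset.sum_add_distrib
      _ = (2:ℝ) • (∑ i, ∑ j, G i j) := by rw [← hswapG, two_smul]
  exact smul_right_injective V two_ne_zero h2

/-- The operator `⟨∇* f⟩` is the negative adjoint of the discrete gradient `⟨∇f⟩`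
with respect to the inner product `(f,g) = ∑_i |ω_i| f_i g_i`:
`∑_i |ω_i| ⟨∇f⟩_i g_i = -∑_i |ω_i| f_i ⟨∇*g⟩_i` for all scalar fields `f, g`. -/
theorem discrete_gradient_negative_adjoint {N : ℕ}
    (x : Fin N → EuclideanSpace ℝ (Fin 2))
    (A : Fin N → ℝ) (hA : ∀ i, 0 < A i)
    (Γ : Fin N → Fin N → ℝ) (hΓnn : ∀ i j, 0 ≤ Γ i j)
    (hΓsymm : ∀ i j, Γ i j = Γ j i) (hΓdiag : ∀ i, Γ i i = 0)
    (m : Fin N → Fin N → EuclideanSpace ℝ (Fin 2))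
    (hmsymm : ∀ i j, m i j = m j i)
    (grad adj : (Fin N → ℝ) → Fin N → EuclideanSpace ℝ (Fin 2))
    (hgrad : ∀ f i, grad f i =
      -((A i)⁻¹) • ∑ j, ((Γ i j / dist (x i) (x j)) * (f i - f j)) • (m i j - x i))
    (hadj : ∀ g i, adj g i =
      (A i)⁻¹ • ∑ j, (Γ i j / dist (x i) (x j)) •
        ((g i - g j) • (m i j - (2:ℝ)⁻¹ • (x i + x j))
          - ((g i + g j) / 2) • (x i - x j)))
    (f g : Fin N → ℝ) :
    (∑ i, (A i * g i) • grad f i) = -(∑ i, (A i * f i) • adj g i) := by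
  have hAne : ∀ i, A i ≠ 0 := fun i => (hA i).ne'
  have hL : ∀ i, (A i * g i) • grad f i =
      ∑ j, (-(g i) * ((Γ i j / dist (x i) (x j)) * (f i - f j))) • (m i j - x i) := by
    intro i
    rw [hgrad, smul_smul, Finset.smul_sum]
    have : A i * g i * -(A i)⁻¹ = -(g i) := by field_simp [hAne i]
    rw [this]
    exact Finset.sum_congr rfl fun j _ => by rw [smul_smul]
  have hR : ∀ i, (A i * f i) • adj g i =
      ∑ j, (f i * (Γ i j / dist (x i) (x j))) •
        ((g i - g j) • (m i j - (2:ℝ)⁻¹ • (x i + x j))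
          - ((g i + g j) / 2) • (x i - x j)) := by
    intro i
    rw [hadj, smul_smul, Finset.smul_sum]
    have : A i * f i * (A i)⁻¹ = f i := by field_simp [hAne i]
    rw [this]
    exact Finset.sum_congr rfl fun j _ => by rw [smul_smul]
  simp only [hL, hR]
  simp only [← Finset.sum_neg_distrib]
  refine sum_sum_eq_of_symm _ _ fun i j => ?_
  set c := Γ i j / dist (x i) (x j) with hc
  have hcsymm : Γ j i / dist (x j) (x i) = c := by rw [hc, hΓsymm, dist_comm]
  rw [hcsymm, hmsymm j i]
  module
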